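/- Let f_r : {(x,u) ∈ ℝ^4 × ℝ^2 : x^4 ≠ −1} → ℝ^4 be the reduced system f_r(x,u) = ( (−x^2(u^2+1)+u^1(x^4+1))/(x^4+1), x^4(u^2+1), −x^1+x^4−1, u^2 ). Then: (i) the functions x^4 and x^4 − x^1 factor through f_r independently of the inputs, via the identities f_r^2(x,u) = x^4 · ( f_r^4(x,u) + 1 ) and f_r^3(x,u) = (x^4 − x^1) − 1; and (ii) for every smooth γ : ℝ^4 → ℝ, if the composite γ ∘ f_r is independent of the inputs (u^1, u^2) on an open subset of the domain, then γ ∘ f_r is also independent of x^2 and of x^3 there, i.e., its differential lies in span(dx^1, dx^4). -/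

import Mathlib

/-- The reduced system `f_r (x, u) = ((−x²(u²+1)+u¹(x⁴+1))/(x⁴+1), x⁴(u²+1), −x¹+x⁴−1, u²)`
(indices shifted down by one), defined on `{(x, u) : x⁴ ≠ −1}`. -/
noncomputable def reducedSystem : (Fin 4 → ℝ) × (Fin 2 → ℝ) → Fin 4 → ℝ := fun p =>
  ![(-(p.1 1) * (p.2 1 + 1) + p.2 0 * (p.1 3 + 1)) / (p.1 3 + 1),
    p.1 3 * (p.2 1 + 1),
    -(p.1 0) + p.1 3 - 1,
    p.2 1]

/-- The coordinate one-form `dx¹` on `ℝ⁴ × ℝ²`. -/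
noncomputable def dxOne : ((Fin 4 → ℝ) × (Fin 2 → ℝ)) →L[ℝ] ℝ :=
  (ContinuousLinearMap.proj (0 : Fin 4)).comp
    (ContinuousLinearMap.fst ℝ (Fin 4 → ℝ) (Fin 2 → ℝ))

/-- The coordinate one-form `dx⁴` on `ℝ⁴ × ℝ²`. -/
noncomputable def dxFour : ((Fin 4 → ℝ) × (Fin 2 → ℝ)) →L[ℝ] ℝ :=
  (ContinuousLinearMap.proj (3 : Fin 4)).comp
    (ContinuousLinearMap.fst ℝ (Fin 4 → ℝ) (Fin 2 → ℝ))

lemma decomp (v : (Fin 4 → ℝ) × (Fin 2 → ℝ)) :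
    v = v.1 0 • ((![1,0,0,0] : Fin 4 → ℝ), (0 : Fin 2 → ℝ))
      + v.1 1 • ((![0,1,0,0] : Fin 4 → ℝ), (0 : Fin 2 → ℝ))
      + v.1 2 • ((![0,0,1,0] : Fin 4 → ℝ), (0 : Fin 2 → ℝ))
      + v.1 3 • ((![0,0,0,1] : Fin 4 → ℝ), (0 : Fin 2 → ℝ))
      + v.2 0 • ((0 : Fin 4 → ℝ), (![1,0] : Fin 2 → ℝ))
      + v.2 1 • ((0 : Fin 4 → ℝ), (![0,1] : Fin 2 → ℝ)) := by
  refine Prod.ext ?_ ?_ <;> funext i <;> fin_cases i <;>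
    simp [Prod.fst_add, Prod.snd_add]

/-- (i) The functions `x⁴` and `x⁴ − x¹` factor through `f_r` independently of the inputs, via
`f_r² = x⁴ (f_r⁴ + 1)` and `f_r³ = (x⁴ − x¹) − 1`; and
(ii) for every smooth `γ : ℝ⁴ → ℝ`, if `γ ∘ f_r` is independent of the inputs `(u¹, u²)` on
an open subset of the domain, then there it is also independent of `x²` and of `x³`, i.e.
its differential lies in `span (dx¹, dx⁴)`. -/
theorem reducedSystem_largest_codistribution :
    (∀ p : (Fin 4 → ℝ) × (Fin 2 → ℝ), p.1 3 ≠ -1 →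
      reducedSystem p 1 = p.1 3 * (reducedSystem p 3 + 1) ∧
      reducedSystem p 2 = (p.1 3 - p.1 0) - 1) ∧
    (∀ γ : (Fin 4 → ℝ) → ℝ, ContDiff ℝ (⊤ : ℕ∞) γ →
      ∀ O : Set ((Fin 4 → ℝ) × (Fin 2 → ℝ)), IsOpen O →
        O ⊆ {p : (Fin 4 → ℝ) × (Fin 2 → ℝ) | p.1 3 ≠ -1} →
        (∀ p ∈ O,
          fderiv ℝ (fun q => γ (reducedSystem q)) p ((0 : Fin 4 → ℝ), ![1, 0]) = 0 ∧
          fderiv ℝ (fun q => γ (reducedSystem q)) p ((0 : Fin 4 → ℝ), ![0, 1]) = 0) →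
        ∀ p ∈ O,
          fderiv ℝ (fun q => γ (reducedSystem q)) p (![0, 1, 0, 0], (0 : Fin 2 → ℝ)) = 0 ∧
          fderiv ℝ (fun q => γ (reducedSystem q)) p (![0, 0, 1, 0], (0 : Fin 2 → ℝ)) = 0 ∧
          fderiv ℝ (fun q => γ (reducedSystem q)) p ∈ Submodule.span ℝ {dxOne, dxFour}) := by
  constructor
  · intro p hp
    constructor <;> (simp [reducedSystem]; try ring)
  · intro γ hγ O hO hOsub h p hp
    have hd : p.1 3 + 1 ≠ 0 := by
      have := hOsub hp; simp only [Set.mem_setOf_eq] at this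
      intro hc; apply this; linarith
    set g : (Fin 4 → ℝ) × (Fin 2 → ℝ) → ℝ := fun q => γ (reducedSystem q) with hg
    have hcoord : ∀ i : Fin 4,
        DifferentiableAt ℝ (fun q : (Fin 4 → ℝ) × (Fin 2 → ℝ) => q.1 i) p :=
      fun i => ((ContinuousLinearMap.proj i).comp
        (ContinuousLinearMap.fst ℝ (Fin 4 → ℝ) (Fin 2 → ℝ))).differentiableAt
    have hucoord : ∀ j : Fin 2,
        DifferentiableAt ℝ (fun q : (Fin 4 → ℝ) × (Fin 2 → ℝ) => q.2 j) p :=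
      fun j => ((ContinuousLinearMap.proj j).comp
        (ContinuousLinearMap.snd ℝ (Fin 4 → ℝ) (Fin 2 → ℝ))).differentiableAt
    have hFd : DifferentiableAt ℝ reducedSystem p := by
      apply differentiableAt_pi.mpr
      intro i
      fin_cases i
      · show DifferentiableAt ℝ
          (fun q : (Fin 4 → ℝ) × (Fin 2 → ℝ) =>
            (-(q.1 1) * (q.2 1 + 1) + q.2 0 * (q.1 3 + 1)) * (q.1 3 + 1)⁻¹) p
        have hnum : DifferentiableAt ℝ
            (fun q : (Fin 4 → ℝ) × (Fin 2 → ℝ) =>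
              -(q.1 1) * (q.2 1 + 1) + q.2 0 * (q.1 3 + 1)) p :=
          ((((hcoord 1).neg).mul ((hucoord 1).add (differentiableAt_const 1))).add
            ((hucoord 0).mul ((hcoord 3).add (differentiableAt_const 1))))
        have hden : DifferentiableAt ℝ
            (fun q : (Fin 4 → ℝ) × (Fin 2 → ℝ) => q.1 3 + 1) p :=
          (hcoord 3).add (differentiableAt_const 1)
        exact hnum.mul (hden.inv hd)
      · show DifferentiableAt ℝ
          (fun q : (Fin 4 → ℝ) × (Fin 2 → ℝ) => q.1 3 * (q.2 1 + 1)) p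
        exact (hcoord 3).mul ((hucoord 1).add (differentiableAt_const 1))
      · show DifferentiableAt ℝ
          (fun q : (Fin 4 → ℝ) × (Fin 2 → ℝ) => -(q.1 0) + q.1 3 - 1) p
        exact (((hcoord 0).neg).add (hcoord 3)).sub (differentiableAt_const 1)
      · show DifferentiableAt ℝ
          (fun q : (Fin 4 → ℝ) × (Fin 2 → ℝ) => q.2 1) p
        exact hucoord 1
    have hgd : DifferentiableAt ℝ g p :=
      ((hγ.differentiable (by simp)) (reducedSystem p)).comp p hFd
    have hL : HasFDerivAt g (fderiv ℝ g p) p := hgd.hasFDerivAt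
    set L := fderiv ℝ g p with hLdef
    have hw0 : L ((0 : Fin 4 → ℝ), ![1, 0]) = 0 := (h p hp).1
    have hw1 : L ((0 : Fin 4 → ℝ), ![0, 1]) = 0 := (h p hp).2
    set s : ℝ := -(p.2 1 + 1) / (p.1 3 + 1) with hs
    -- F along the x¹-line equals F along a rescaled u⁰-line
    have hF1 : ∀ t : ℝ,
        reducedSystem (p + t • ((![0,1,0,0] : Fin 4 → ℝ), (0 : Fin 2 → ℝ)))
          = reducedSystem (p + (t * s) • ((0 : Fin 4 → ℝ), (![1,0] : Fin 2 → ℝ))) := by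
      intro t
      funext i
      fin_cases i
      · simp only [reducedSystem, hs]
        simp
        field_simp
        ring
      · simp [reducedSystem]
      · simp [reducedSystem]
      · simp [reducedSystem]
    have hF2 : ∀ t : ℝ,
        reducedSystem (p + t • ((![0,0,1,0] : Fin 4 → ℝ), (0 : Fin 2 → ℝ)))
          = reducedSystem p := by
      intro t
      funext i
      fin_cases i <;>
        simp [reducedSystem, Prod.fst_add, Prod.snd_add]
    have h1 : L ((![0,1,0,0] : Fin 4 → ℝ), (0 : Fin 2 → ℝ)) = 0 := by
      have lineA : HasDerivAt
          (fun t : ℝ => g (p + t • ((![0,1,0,0] : Fin 4 → ℝ), (0 : Fin 2 → ℝ))))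
          (L ((![0,1,0,0] : Fin 4 → ℝ), (0 : Fin 2 → ℝ))) 0 := hL.hasLineDerivAt _
      have lineB : HasDerivAt
          (fun r : ℝ => g (p + r • ((0 : Fin 4 → ℝ), (![1,0] : Fin 2 → ℝ))))
          (L ((0 : Fin 4 → ℝ), (![1,0] : Fin 2 → ℝ))) ((0:ℝ) * s) := by
        rw [zero_mul]; exact hL.hasLineDerivAt _
      have comp := lineB.comp (0:ℝ) (hasDerivAt_mul_const s)
      have heq : (fun t : ℝ => g (p + t • ((![0,1,0,0] : Fin 4 → ℝ), (0 : Fin 2 → ℝ))))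
          = (fun r : ℝ => g (p + r • ((0 : Fin 4 → ℝ), (![1,0] : Fin 2 → ℝ)))) ∘
            fun t : ℝ => t * s := by
        funext t
        simp only [Function.comp_apply, hg]
        rw [hF1 t]
      rw [← heq] at comp
      have := lineA.unique comp
      rw [this, hw0, zero_mul]
    have h2 : L ((![0,0,1,0] : Fin 4 → ℝ), (0 : Fin 2 → ℝ)) = 0 := by
      have lineC : HasDerivAt
          (fun t : ℝ => g (p + t • ((![0,0,1,0] : Fin 4 → ℝ), (0 : Fin 2 → ℝ))))
          (L ((![0,0,1,0] : Fin 4 → ℝ), (0 : Fin 2 → ℝ))) 0 := hL.hasLineDerivAt _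
      have hconst : (fun t : ℝ => g (p + t • ((![0,0,1,0] : Fin 4 → ℝ), (0 : Fin 2 → ℝ))))
          = fun _ : ℝ => g p := by
        funext t; simp only [hg]; rw [hF2 t]
      rw [hconst] at lineC
      exact lineC.unique (hasDerivAt_const 0 (g p))
    refine ⟨h1, h2, ?_⟩
    have key : L = L ((![1,0,0,0] : Fin 4 → ℝ), (0 : Fin 2 → ℝ)) • dxOne
        + L ((![0,0,0,1] : Fin 4 → ℝ), (0 : Fin 2 → ℝ)) • dxFour := by
      apply ContinuousLinearMap.ext
      intro v
      conv_lhs => rw [decomp v]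
      simp only [map_add, map_smul, smul_eq_mul, h1, h2, hw0, hw1, mul_zero]
      simp [dxOne, dxFour]
      ring
    rw [key]
    exact Submodule.add_mem _
      (Submodule.smul_mem _ _ (Submodule.subset_span (by simp)))
      (Submodule.smul_mem _ _ (Submodule.subset_span (by simp)))
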